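/- Let P be a minimal prime ideal of I_mn(2). Then every position in S_P belongs to the boundary of some connected component of N_P. -/

import Mathlib

open MvPolynomial

/-- The ideal of adjacent 2×2 minors of the generic `m × n` matrix. -/
noncomputable def adjMinors2Ideal (K : Type*) [Field K] (m n : ℕ) :
    Ideal (MvPolynomial (Fin m × Fin n) K) :=
  Ideal.span {f | ∃ (i j : ℕ) (hi : i + 1 < m) (hj : j + 1 < n),
    f = X (⟨i, by omega⟩, ⟨j, by omega⟩) * X (⟨i + 1, hi⟩, ⟨j + 1, hj⟩)
      - X (⟨i, by omega⟩, ⟨j + 1, hj⟩) * X (⟨i + 1, hi⟩, ⟨j, by omega⟩)}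

/-- Two grid positions are adjacent if their coordinates differ by at most 1. -/
def gridAdj {m n : ℕ} (p q : Fin m × Fin n) : Prop :=
  p.1.1 ≤ q.1.1 + 1 ∧ q.1.1 ≤ p.1.1 + 1 ∧ p.2.1 ≤ q.2.1 + 1 ∧ q.2.1 ≤ p.2.1 + 1

/-- A set of grid positions is connected if any two of its elements are joined by a
path inside the set whose consecutive positions are adjacent. -/
def ConnectedIn {m n : ℕ} (A : Set (Fin m × Fin n)) : Prop :=
  ∀ p ∈ A, ∀ q ∈ A,
    Relation.ReflTransGen (fun x y => gridAdj x y ∧ x ∈ A ∧ y ∈ A) p q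

/-- `T` is a connected component of `N`: a maximal connected subset. -/
def IsComponent {m n : ℕ} (N T : Set (Fin m × Fin n)) : Prop :=
  T.Nonempty ∧ T ⊆ N ∧ ConnectedIn T ∧
    ∀ T', T ⊆ T' → T' ⊆ N → ConnectedIn T' → T' = T

/-- A rectangle of grid positions. -/
def IsRect {m n : ℕ} (T : Set (Fin m × Fin n)) : Prop :=
  ∃ i s j t : ℕ,
    T = {p : Fin m × Fin n | i ≤ p.1.1 ∧ p.1.1 ≤ s ∧ j ≤ p.2.1 ∧ p.2.1 ≤ t}

/-- The boundary of a set of grid positions: positions outside of it that are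
adjacent to some position in it. -/
def gridBdry {m n : ℕ} (T : Set (Fin m × Fin n)) : Set (Fin m × Fin n) :=
  {p | p ∉ T ∧ ∃ q ∈ T, gridAdj p q}

/-- The set of positions whose variable lies in `P`. -/
def SP {K : Type*} [Field K] {m n : ℕ} (P : Ideal (MvPolynomial (Fin m × Fin n) K)) :
    Set (Fin m × Fin n) := {p | X p ∈ P}

/-- The set of positions whose variable does not lie in `P`. -/
def NP {K : Type*} [Field K] {m n : ℕ} (P : Ideal (MvPolynomial (Fin m × Fin n) K)) :
    Set (Fin m × Fin n) := {p | X p ∉ P}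


lemma gridAdj_symm' {m n : ℕ} {p q : Fin m × Fin n} (h : gridAdj p q) : gridAdj q p :=
  ⟨h.2.1, h.1, h.2.2.2, h.2.2.1⟩

lemma exists_component' {m n : ℕ} (N : Set (Fin m × Fin n)) {q : Fin m × Fin n}
    (hq : q ∈ N) : ∃ T, IsComponent N T ∧ q ∈ T := by
  classical
  set rel : Fin m × Fin n → Fin m × Fin n → Prop :=
    fun x y => gridAdj x y ∧ x ∈ N ∧ y ∈ N with hrel
  set T : Set (Fin m × Fin n) := {r | Relation.ReflTransGen rel q r} with hT
  have hqT : q ∈ T := Relation.ReflTransGen.refl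
  have hTN : T ⊆ N := by
    intro r hr
    have hr' : Relation.ReflTransGen rel q r := hr
    induction hr' with
    | refl => exact hq
    | tail _ h2 _ => exact h2.2.2
  have lift : ∀ r ∈ T, Relation.ReflTransGen
      (fun x y => gridAdj x y ∧ x ∈ T ∧ y ∈ T) q r := by
    intro r hr
    have hr' : Relation.ReflTransGen rel q r := hr
    induction hr' with
    | refl => exact Relation.ReflTransGen.refl
    | tail h1 h2 ih =>
      exact (ih h1).tail ⟨h2.1, h1, h1.tail h2⟩
  have hsymm : Symmetric (fun x y : Fin m × Fin n => gridAdj x y ∧ x ∈ T ∧ y ∈ T) :=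
    fun x y h => ⟨gridAdj_symm' h.1, h.2.2, h.2.1⟩
  refine ⟨T, ⟨⟨q, hqT⟩, hTN, ?_, ?_⟩, hqT⟩
  · intro r hr s hs
    exact (@Std.Symm.symm _ _ (@Relation.ReflTransGen.stdSymm _ _ ⟨fun a b h => hsymm h⟩) _ _ (lift r hr)).trans (lift s hs)
  · intro T' hTT' hT'N hconn
    apply Set.Subset.antisymm _ hTT'
    intro x hx
    have h := hconn q (hTT' hqT) x hx
    exact Relation.ReflTransGen.mono (p := rel) (fun a b h => ⟨h.1, hT'N h.2.1, hT'N h.2.2⟩) q x h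

set_option maxHeartbeats 2000000 in
lemma exists_adj_not_mem'
    (K : Type*) [Field K] (m n : ℕ)
    (P : Ideal (MvPolynomial (Fin m × Fin n) K))
    (hP : P ∈ (adjMinors2Ideal K m n).minimalPrimes)
    (p : Fin m × Fin n) (hp : X p ∈ P) :
    ∃ q, gridAdj p q ∧ X q ∉ P := by
  classical
  by_contra hcon
  push_neg at hcon
  haveI hPp : P.IsPrime := hP.1.1
  have hIP : adjMinors2Ideal K m n ≤ P := hP.1.2
  set mk : MvPolynomial (Fin m × Fin n) K →+* MvPolynomial (Fin m × Fin n) K ⧸ P :=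
    Ideal.Quotient.mk P with hmk
  set ψa : MvPolynomial (Fin m × Fin n) K →ₐ[K]
      Polynomial (MvPolynomial (Fin m × Fin n) K ⧸ P) :=
    MvPolynomial.aeval (fun q : Fin m × Fin n =>
      if q = p then Polynomial.X else Polynomial.C (mk (X q))) with hψa
  set ψ := ψa.toRingHom with hψ
  have hψX : ∀ q, ψ (X q) = if q = p then Polynomial.X else Polynomial.C (mk (X q)) := by
    intro q; simp [hψ, hψa]
  have hψzero : ∀ q, q ≠ p → X q ∈ P → ψ (X q) = 0 := by
    intro q hqp hqP
    rw [hψX, if_neg hqp, Ideal.Quotient.eq_zero_iff_mem.mpr hqP, map_zero]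
  have hIker : adjMinors2Ideal K m n ≤ RingHom.ker ψ := by
    rw [adjMinors2Ideal, Ideal.span_le]
    rintro f ⟨i, j, hi, hj, rfl⟩
    simp only [SetLike.mem_coe, RingHom.mem_ker]
    by_cases hc : p = ((⟨i, by omega⟩, ⟨j, by omega⟩) : Fin m × Fin n)
        ∨ p = ((⟨i + 1, hi⟩, ⟨j + 1, hj⟩) : Fin m × Fin n)
        ∨ p = ((⟨i, by omega⟩, ⟨j + 1, hj⟩) : Fin m × Fin n)
        ∨ p = ((⟨i + 1, hi⟩, ⟨j, by omega⟩) : Fin m × Fin n)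
    · have hco : p.1.1 ≤ i + 1 ∧ i ≤ p.1.1 ∧ p.2.1 ≤ j + 1 ∧ j ≤ p.2.1 := by
        rcases hc with rfl | rfl | rfl | rfl <;> simp
      have hcornP : ∀ q : Fin m × Fin n, (q.1.1 = i ∨ q.1.1 = i + 1) →
          (q.2.1 = j ∨ q.2.1 = j + 1) → X q ∈ P := by
        intro q h1 h2
        exact hcon q ⟨by omega, by omega, by omega, by omega⟩
      have prod0 : ∀ u v : Fin m × Fin n, u ≠ v → X u ∈ P → X v ∈ P →
          ψ (X u * X v) = 0 := by
        intro u v huv hu hv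
        rcases eq_or_ne u p with rfl | h
        · rw [map_mul, hψzero v (fun h => huv h.symm) hv, mul_zero]
        · rw [map_mul, hψzero u h hu, zero_mul]
      rw [map_sub,
        prod0 _ _ (by simp [Prod.ext_iff, Fin.ext_iff])
          (hcornP _ (Or.inl rfl) (Or.inl rfl)) (hcornP _ (Or.inr rfl) (Or.inr rfl)),
        prod0 _ _ (by simp [Prod.ext_iff, Fin.ext_iff])
          (hcornP _ (Or.inl rfl) (Or.inr rfl)) (hcornP _ (Or.inr rfl) (Or.inl rfl)),
        sub_zero]
    · push_neg at hc
      obtain ⟨h1, h2, h3, h4⟩ := hc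
      have hmem : (X (⟨i, by omega⟩, ⟨j, by omega⟩) * X (⟨i + 1, hi⟩, ⟨j + 1, hj⟩)
          - X (⟨i, by omega⟩, ⟨j + 1, hj⟩) * X (⟨i + 1, hi⟩, ⟨j, by omega⟩) :
          MvPolynomial (Fin m × Fin n) K) ∈ P :=
        hIP (Ideal.subset_span ⟨i, j, hi, hj, rfl⟩)
      rw [map_sub, map_mul, map_mul, hψX, hψX, hψX, hψX,
        if_neg (fun h => h1 h.symm), if_neg (fun h => h2 h.symm),
        if_neg (fun h => h3 h.symm), if_neg (fun h => h4 h.symm)]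
      have h0 := Ideal.Quotient.eq_zero_iff_mem.mpr hmem
      simp only [map_sub, map_mul] at h0
      rw [← Polynomial.C_mul, ← Polynomial.C_mul, ← Polynomial.C_sub, show
        mk (X (⟨i, by omega⟩, ⟨j, by omega⟩)) * mk (X (⟨i + 1, hi⟩, ⟨j + 1, hj⟩))
        - mk (X (⟨i, by omega⟩, ⟨j + 1, hj⟩)) * mk (X (⟨i + 1, hi⟩, ⟨j, by omega⟩)) = 0
        from h0, Polynomial.C_0]
  have hkerP : RingHom.ker ψ ≤ P := by
    have hcomp : ((Polynomial.aeval (R := MvPolynomial (Fin m × Fin n) K ⧸ P)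
        (mk (X p))).restrictScalars K).comp ψa = Ideal.Quotient.mkₐ K P := by
      apply MvPolynomial.algHom_ext
      intro q
      simp only [AlgHom.comp_apply, hψa, MvPolynomial.aeval_X]
      by_cases h : q = p
      · subst h; simp [hmk]
      · simp [h, hmk]
    intro f hf
    have h0 : ψ f = 0 := hf
    have := congrArg (fun g => g f) hcomp
    simp only [AlgHom.comp_apply] at this
    rw [show ψa f = ψ f from rfl, h0, map_zero] at this
    have h2 : (Ideal.Quotient.mk P) f = 0 := by simpa using this.symm
    exact Ideal.Quotient.eq_zero_iff_mem.mp h2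
  have hker_prime : (RingHom.ker ψ).IsPrime := RingHom.ker_isPrime ψ
  have hle : P ≤ RingHom.ker ψ := hP.2 ⟨hker_prime, hIker⟩ hkerP
  have h0 : ψ (X p) = 0 := hle hp
  rw [hψX, if_pos rfl] at h0
  exact Polynomial.X_ne_zero h0


/-- every position of `S_P` belongs to the boundary of some connected
component of `N_P`. -/
theorem SP_subset_union_of_boundaries
    (K : Type*) [Field K] (m n : ℕ) (hm : 2 ≤ m) (hn : 2 ≤ n)
    (P : Ideal (MvPolynomial (Fin m × Fin n) K))
    (hP : P ∈ (adjMinors2Ideal K m n).minimalPrimes) :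
    ∀ p ∈ SP P, ∃ T, IsComponent (NP P) T ∧ p ∈ gridBdry T := by
  intro p hp
  obtain ⟨q, hadj, hq⟩ := exists_adj_not_mem' K m n P hP p hp
  obtain ⟨T, hTc, hqT⟩ := exists_component' (NP P) (show q ∈ NP P from hq)
  exact ⟨T, hTc, fun hpT => hTc.2.1 hpT hp, q, hqT, hadj⟩
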